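/- Let a and b be coprime positive integers. For every (b,-a)-Dyck partition π ∈ D_{b,-a}(a,b), the partitions f̃(π) and f(π) are equal. -/

import Mathlib

inductive Letter : Type
  | N : Letter
  | E : Letter
deriving DecidableEq, Repr

/-- weight of a letter: `N` has weight `r`, `E` has weight `s`. -/
def wt (r s : ℤ) : Letter → ℤ
  | Letter.N => r
  | Letter.E => s

/-- Pair each letter of the word with its `(r,s)`-level (east-north convention),
    starting from level `l`. -/
def lvls (r s : ℤ) : ℤ → List Letter → List (Letter × ℤ)
  | _, [] => []
  | l, c :: w => (c, l + wt r s c) :: lvls r s (l + wt r s c) w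

/-- Helper for `mkwd`: given the row lengths of the partition read from the bottom
    of the rectangle (weakly increasing list), produce the frontier word. -/
def stairs (b : ℕ) : ℕ → List ℕ → List Letter
  | prev, [] => List.replicate (b - prev) Letter.E
  | prev, q :: qs => List.replicate (q - prev) Letter.E ++ Letter.N :: stairs b q qs

/-- `mkwd a b π`: the word of the frontier lattice path (from `(0,0)` to `(b,a)`) of
    the partition `π` drawn in the `a×b` rectangle: the number of `E`'s before the
    `i`-th `N` is the `(a+1-i)`-th part of `π` (padded with zero parts to length `a`). -/
def mkwd (a b : ℕ) (π : List ℕ) : List Letter :=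
  stairs b 0 ((π ++ List.replicate (a - π.length) 0).reverse)

/-- The `i`-th part of `π` (1-based), zero beyond the length of `π`. -/
def part (π : List ℕ) (i : ℕ) : ℕ := π.getD (i - 1) 0

/-- The `(b,-a)`-level of the lattice square `[x,x+1]×[y,y+1]`, i.e. of its
    southeast corner `(x+1, y)`. -/
def sqLevel (a b : ℕ) (x y : ℕ) : ℤ := (b : ℤ) * y - (a : ℤ) * (x + 1)

/-- The set of `(b,-a)`-levels of the lattice squares lying above the line `by = ax`
    and below `mkpath(π)` (the square `(x,y)` lies below the path iff `x ≥ part π (a-y)`,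
    and strictly above the line iff its level is positive). -/
def lvlSet (a b : ℕ) (π : List ℕ) : Finset ℤ :=
  ((Finset.range b ×ˢ Finset.range a).filter
    (fun p => part π (a - p.2) ≤ p.1 ∧ 0 < sqLevel a b p.1 p.2)).image
    (fun p => sqLevel a b p.1 p.2)

/-- `π` is a `(b,-a)`-Dyck partition: every step of `mkpath(π)` has nonnegative
    `(b,-a)`-level (east-north convention), i.e. the path stays weakly above `by = ax`. -/
def IsDyckPtn (a b : ℕ) (π : List ℕ) : Prop :=
  ∀ p ∈ lvls (b : ℤ) (-(a : ℤ)) 0 (mkwd a b π), 0 ≤ p.2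

/-- `π` is a partition contained in the `a×b` rectangle. -/
def IsPtnIn (a b : ℕ) (π : List ℕ) : Prop :=
  List.Pairwise (· ≥ ·) π ∧ π.length ≤ a ∧ ∀ p ∈ π, p ≤ b

/-- `mkptn w`: the partition associated to the word `w`: one part for each `N` of `w`,
    equal to the number of `E`'s preceding it, listed in decreasing order
    (zero parts are discarded). -/
def mkptn (w : List Letter) : List ℕ :=
  (((List.range w.length).filterMap (fun p =>
      if w[p]? = some Letter.N then some ((w.take p).count Letter.E) else none)).reverse).filter
    (fun t => decide (0 < t))

/-- The word `z = z₀z₁z₂⋯` (truncated at the harmless index `a*b`, beyond which all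
    letters are `E`): `zᵢ = N` iff `i` is the level of a lattice square between
    `mkpath(π)` and the line `by = ax`, and `zᵢ = E` otherwise (in particular `z₀ = E`). -/
def zwordAHJ (a b : ℕ) (π : List ℕ) : List Letter :=
  (List.range (a * b)).map (fun i => if (i : ℤ) ∈ lvlSet a b π then Letter.N else Letter.E)

/-- The map `f̃`: `f̃(π) = mkptn(z₀z₁z₂⋯)`. -/
def ftilde (a b : ℕ) (π : List ℕ) : List ℕ := mkptn (zwordAHJ a b π)

/-- The map `f`: the partition whose first-column hook-lengths, in increasing order,
    are the levels of the squares between `mkpath(π)` and the line `by = ax`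
    (the `i`-th row from the bottom, `i ≥ 1`, has length `h_i - i + 1`). -/
def fAHJ (a b : ℕ) (π : List ℕ) : List ℕ :=
  let h := (lvlSet a b π).sort (· ≤ ·)
  ((List.range h.length).map (fun i => (h.getD i 0 - (i : ℤ)).toNat)).reverse

namespace AHJ

/-- the parts of `mkptn` in reading order, before reversing and filtering. -/
def core (w : List Letter) : List ℕ :=
  (List.range w.length).filterMap (fun p =>
    if w[p]? = some Letter.N then some ((w.take p).count Letter.E) else none)

lemma mkptn_eq_core (w : List Letter) :
    mkptn w = ((core w).reverse).filter (fun t => decide (0 < t)) := rfl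

lemma core_concat (w : List Letter) (c : Letter) :
    core (w ++ [c]) = core w ++ (if c = Letter.N then [w.count Letter.E] else []) := by
  unfold core
  rw [List.length_append, List.length_singleton, List.range_add, List.filterMap_append]
  congr 1
  · apply List.filterMap_congr
    intro p hp
    rw [List.mem_range] at hp
    rw [List.getElem?_append, if_pos hp, List.take_append_of_le_length hp.le]
  · have hr1 : List.range 1 = [0] := rfl
    rw [hr1]
    simp only [List.map_cons, List.map_nil, Nat.add_zero, List.filterMap_cons, List.filterMap_nil]
    rw [List.getElem?_concat_length, List.take_left]
    cases c <;> simp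

lemma core_concat_N (w : List Letter) :
    core (w ++ [Letter.N]) = core w ++ [w.count Letter.E] := by
  rw [core_concat]; simp

lemma core_append_replicate_E (w : List Letter) (k : ℕ) :
    core (w ++ List.replicate k Letter.E) = core w := by
  induction k with
  | zero => simp
  | succ k ih =>
    rw [List.replicate_succ', ← List.append_assoc, core_concat, ih]
    simp

/-- indicator word of a set of naturals -/
def word (n : ℕ) (l : List ℕ) : List Letter :=
  (List.range n).map (fun i => if i ∈ l then Letter.N else Letter.E)

lemma word_nil (n : ℕ) : word n [] = List.replicate n Letter.E := by
  rw [List.eq_replicate_iff]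
  constructor
  · simp [word]
  · intro b hb
    simp only [word, List.mem_map] at hb
    obtain ⟨i, _, rfl⟩ := hb
    simp

lemma word_concat {n m : ℕ} {l : List ℕ} (hl : ∀ x ∈ l, x < m) (hmn : m < n) :
    word n (l ++ [m]) =
      (word m l ++ [Letter.N]) ++ List.replicate (n - (m + 1)) Letter.E := by
  unfold word
  have hn : n = (m + 1) + (n - (m + 1)) := by omega
  rw [hn, List.range_add, List.map_append, List.range_succ, List.map_append]
  congr 1
  · congr 1
    · apply List.map_congr_left
      intro i hi
      rw [List.mem_range] at hi
      have : i ∈ l ++ [m] ↔ i ∈ l := by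
        simp only [List.mem_append, List.mem_singleton]
        constructor
        · rintro (h | rfl); · exact h
          · omega
        · exact Or.inl
      simp [this]
    · simp
  · rw [List.eq_replicate_iff]
    constructor
    · simp
    · intro c hc
      simp only [List.map_map, List.mem_map, List.mem_range, Function.comp] at hc
      obtain ⟨j, hj, rfl⟩ := hc
      have h1 : m + 1 + j ∉ l ++ [m] := by
        simp only [List.mem_append, List.mem_singleton]
        rintro (h | h)
        · have := hl _ h; omega
        · omega
      simp [h1]

lemma sorted_length_le {l : List ℕ} (hs : l.Pairwise (· < ·)) {m : ℕ}
    (hb : ∀ x ∈ l, x < m) : l.length ≤ m := by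
  induction l using List.reverseRecOn generalizing m with
  | nil => simp
  | append_singleton l' m' ih =>
    rw [List.pairwise_append] at hs
    have h1 : l'.length ≤ m' := ih hs.1 (fun x hx => hs.2.2 x hx m' (by simp))
    have h2 : m' < m := hb m' (by simp)
    simp only [List.length_append, List.length_singleton]
    omega

lemma sorted_pos_lt_getD {l : List ℕ} (hs : l.Pairwise (· < ·))
    (hp : ∀ x ∈ l, 0 < x) {i : ℕ} (hi : i < l.length) : i < l.getD i 0 := by
  rw [List.getD_eq_getElem _ _ hi]
  induction i with
  | zero => exact hp _ (l.getElem_mem hi)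
  | succ j ihj =>
    have hj : j < l.length := by omega
    have h1 : j < l[j] := ihj hj
    have h2 : l[j] < l[j+1] := List.pairwise_iff_getElem.mp hs j (j+1) hj hi (by omega)
    omega

lemma count_word (l : List ℕ) (hs : l.Pairwise (· < ·)) :
    ∀ n, (∀ x ∈ l, x < n) → (word n l).count Letter.E = n - l.length := by
  induction l using List.reverseRecOn with
  | nil => intro n _; simp [word_nil]
  | append_singleton l' m ih =>
    intro n hb
    rw [List.pairwise_append] at hs
    have hlm : ∀ x ∈ l', x < m := fun x hx => hs.2.2 x hx m (by simp)
    have hmn : m < n := hb m (by simp)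
    have hlen : l'.length ≤ m := sorted_length_le hs.1 hlm
    rw [word_concat hlm hmn, List.count_append, List.count_append,
      ih hs.1 m hlm, List.count_replicate]
    simp only [List.length_append, List.length_singleton]
    have : List.count Letter.E [Letter.N] = 0 := by decide
    rw [this]
    simp only [show (Letter.E == Letter.E) = true by decide, if_pos]
    omega

lemma core_word (l : List ℕ) (hs : l.Pairwise (· < ·)) :
    ∀ n, (∀ x ∈ l, x < n) →
      core (word n l) = (List.range l.length).map (fun i => l.getD i 0 - i) := by
  induction l using List.reverseRecOn with
  | nil =>
    intro n _
    rw [word_nil, show List.replicate n Letter.E = [] ++ List.replicate n Letter.E by simp,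
      core_append_replicate_E]
    simp [core]
  | append_singleton l' m ih =>
    intro n hb
    rw [List.pairwise_append] at hs
    have hlm : ∀ x ∈ l', x < m := fun x hx => hs.2.2 x hx m (by simp)
    have hmn : m < n := hb m (by simp)
    rw [word_concat hlm hmn, core_append_replicate_E, core_concat_N,
      count_word l' hs.1 m hlm, ih hs.1 m hlm]
    have h1 : List.map (fun i => l'.getD i 0 - i) (List.range l'.length)
        = List.map (fun i => (l' ++ [m]).getD i 0 - i) (List.range l'.length) := by
      apply List.map_congr_left
      intro i hi
      rw [List.mem_range] at hi
      rw [List.getD_append _ _ _ _ hi]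
    have h2 : (l' ++ [m]).getD l'.length 0 = m := by
      rw [List.getD_eq_getElem _ _ (by simp only [List.length_append, List.length_singleton]; omega)]
      exact List.getElem_concat_length rfl _
    rw [h1]
    simp only [List.length_append, List.length_singleton, List.range_succ, List.map_append,
      List.map_cons, List.map_nil, h2]

lemma mkptn_word {l : List ℕ} (hs : l.Pairwise (· < ·)) (hp : ∀ x ∈ l, 0 < x)
    {n : ℕ} (hb : ∀ x ∈ l, x < n) :
    mkptn (word n l) = ((List.range l.length).map (fun i => l.getD i 0 - i)).reverse := by
  rw [mkptn_eq_core, core_word l hs n hb, List.filter_reverse]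
  congr 1
  apply List.filter_eq_self.mpr
  intro t ht
  simp only [List.mem_map, List.mem_range] at ht
  obtain ⟨i, hi, rfl⟩ := ht
  have := sorted_pos_lt_getD hs hp hi
  simp only [decide_eq_true_eq]
  omega

end AHJ

/-- For coprime positive `a`, `b` and every `(b,-a)`-Dyck partition `π` in the
    `a×b` rectangle, the partitions `f̃(π)` and `f(π)` are equal. -/
theorem ftilde_eq_f (a b : ℕ) (ha : 0 < a) (hb : 0 < b) (hab : Nat.Coprime a b)
    (π : List ℕ) (hπ : IsPtnIn a b π) (hD : IsDyckPtn a b π) :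
    ftilde a b π = fAHJ a b π := by
  classical
  have hmem : ∀ z ∈ lvlSet a b π, 0 < z ∧ z < (a:ℤ) * b := by
    intro z hz
    rw [lvlSet, Finset.mem_image] at hz
    obtain ⟨p, hp, rfl⟩ := hz
    rw [Finset.mem_filter, Finset.mem_product, Finset.mem_range, Finset.mem_range] at hp
    obtain ⟨⟨hx, hy⟩, -, hpos⟩ := hp
    refine ⟨hpos, ?_⟩
    rw [sqLevel]
    have h1 : (p.2 : ℤ) ≤ (a : ℤ) - 1 := by
      have : (p.2 : ℤ) < (a : ℤ) := by exact_mod_cast hy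
      omega
    have h2 : (b:ℤ) * p.2 ≤ (b:ℤ) * ((a:ℤ)-1) :=
      mul_le_mul_of_nonneg_left h1 (by positivity)
    have h3 : (a:ℤ) * 1 ≤ (a:ℤ) * ((p.1:ℤ) + 1) := by
      apply mul_le_mul_of_nonneg_left _ (by positivity)
      have : (0:ℤ) ≤ (p.1:ℤ) := by positivity
      omega
    have hb1 : (1:ℤ) ≤ b := by exact_mod_cast hb
    have ha1 : (1:ℤ) ≤ a := by exact_mod_cast ha
    have h4 : (b:ℤ)*((a:ℤ)-1) = (a:ℤ)*b - b := by ring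
    linarith
  set S := lvlSet a b π with hS
  set h := S.sort (· ≤ ·) with hhdef
  have hmemh : ∀ z ∈ h, 0 < z ∧ z < (a:ℤ)*b := fun z hz => hmem z ((Finset.mem_sort _).mp hz)
  have hsortZ : h.Pairwise (· < ·) := List.sortedLT_iff_pairwise.mp (Finset.sortedLT_sort S)
  set l : List ℕ := h.map Int.toNat with hldef
  have hsort : l.Pairwise (· < ·) := by
    rw [hldef, List.pairwise_map]
    exact List.Pairwise.imp_of_mem
      (fun hx hy hxy => by have := (hmemh _ hx).1; omega) hsortZ
  have hpos : ∀ x ∈ l, 0 < x := by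
    intro x hx; rw [hldef, List.mem_map] at hx
    obtain ⟨z, hz, rfl⟩ := hx
    have := (hmemh z hz).1; omega
  have hbound : ∀ x ∈ l, x < a * b := by
    intro x hx; rw [hldef, List.mem_map] at hx
    obtain ⟨z, hz, rfl⟩ := hx
    have h1 := (hmemh z hz).1
    have h2 := (hmemh z hz).2
    have h3 : (a:ℤ)*b = ((a*b : ℕ) : ℤ) := by push_cast; ring
    rw [h3] at h2
    omega
  have hiff : ∀ i : ℕ, ((i : ℤ) ∈ S ↔ i ∈ l) := by
    intro i
    constructor
    · intro hi
      rw [hldef, List.mem_map]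
      exact ⟨(i:ℤ), (Finset.mem_sort _).mpr hi, by simp⟩
    · intro hi
      rw [hldef, List.mem_map] at hi
      obtain ⟨z, hz, hzt⟩ := hi
      have h1 := (hmemh z hz).1
      have h2 : z = (i:ℤ) := by omega
      rw [← h2]
      exact (Finset.mem_sort _).mp hz
  have hzw : zwordAHJ a b π = AHJ.word (a*b) l := by
    have hdo : ∀ n : ℕ, (do let x ← List.range n; pure ((x:ℤ)))
        = List.map (Nat.cast : ℕ → ℤ) (List.range n) := by
      intro n
      induction n with
      | zero => rfl
      | succ k ih =>
        rw [List.range_succ]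
        simp only [List.bind_eq_flatMap, List.pure_def] at *
        rw [List.flatMap_append, List.map_append, ih]
        rfl
    have hdo := hdo (a*b)
    unfold zwordAHJ AHJ.word
    rw [hdo, List.map_map]
    apply List.map_congr_left
    intro i _
    simp only [Function.comp_apply]
    by_cases hc : (i:ℤ) ∈ S
    · rw [if_pos hc, if_pos ((hiff i).mp hc)]
    · rw [if_neg hc, if_neg (fun hh => hc ((hiff i).mpr hh))]
  have hlen : l.length = h.length := by rw [hldef, List.length_map]
  have hfA : fAHJ a b π
      = ((List.range h.length).map (fun i => (h.getD i 0 - (i : ℤ)).toNat)).reverse := rfl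
  rw [ftilde, hzw, AHJ.mkptn_word hsort hpos hbound, hfA]
  congr 1
  rw [hlen]
  apply List.map_congr_left
  intro i hi
  rw [List.mem_range] at hi
  have hil : i < l.length := by rw [hlen]; exact hi
  have e1 : l.getD i 0 = (h.getD i 0).toNat := by
    rw [List.getD_eq_getElem _ _ hil, List.getD_eq_getElem _ _ hi]
    exact List.getElem_map _
  have e2 := AHJ.sorted_pos_lt_getD hsort hpos hil
  have e3 : 0 < h.getD i 0 := by
    rw [List.getD_eq_getElem _ _ hi]; exact (hmemh _ (h.getElem_mem hi)).1
  omega
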